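/- Let X be a real random variable with E[exp(μX)] ≤ exp(μ²ε²/2) for all μ ∈ ℝ, for some ε > 0. Then |E[e^X] − 1 − E[X] − E[X²]/2| ≤ 2ε³ e^{ε²} and |E[X e^X] − E[X] − E[X²]| ≤ 5ε³ e^{ε²}. -/

import Mathlib

open Real

/-- helper: nonneg on Ici 0 from deriv -/
lemma aux_nonneg_Ici {f f' : ℝ → ℝ} (hd : ∀ x, HasDerivAt f (f' x) x)
    (h0 : f 0 = 0) (hp : ∀ x, 0 ≤ x → 0 ≤ f' x) : ∀ x, 0 ≤ x → 0 ≤ f x := by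
  intro x hx
  have hm : MonotoneOn f (Set.Ici (0:ℝ)) := by
    apply monotoneOn_of_deriv_nonneg (convex_Ici 0)
    · exact fun y _ => (hd y).continuousAt.continuousWithinAt
    · intro y _; exact (hd y).differentiableAt.differentiableWithinAt
    · intro y hy
      rw [(hd y).deriv]
      rw [interior_Ici] at hy
      exact hp y (le_of_lt hy)
  have := hm (Set.self_mem_Ici) (by exact hx) hx
  linarith [h0 ▸ this]

/-- helper: nonneg on Iic 0 from nonpos deriv -/
lemma aux_nonneg_Iic {f f' : ℝ → ℝ} (hd : ∀ x, HasDerivAt f (f' x) x)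
    (h0 : f 0 = 0) (hp : ∀ x, x ≤ 0 → f' x ≤ 0) : ∀ x, x ≤ 0 → 0 ≤ f x := by
  intro x hx
  have hm : AntitoneOn f (Set.Iic (0:ℝ)) := by
    apply antitoneOn_of_deriv_nonpos (convex_Iic 0)
    · exact fun y _ => (hd y).continuousAt.continuousWithinAt
    · intro y _; exact (hd y).differentiableAt.differentiableWithinAt
    · intro y hy
      rw [(hd y).deriv]
      rw [interior_Iic] at hy
      exact hp y (le_of_lt hy)
  have := hm (by exact hx) (Set.self_mem_Iic) hx
  linarith [h0 ▸ this]

lemma quad_le_exp (x : ℝ) (hx : 0 ≤ x) : 1 + x + x^2/2 ≤ Real.exp x := by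
  have := Real.quadratic_le_exp_of_nonneg hx
  linarith

lemma exp_le_quad (x : ℝ) (hx : x ≤ 0) : Real.exp x ≤ 1 + x + x^2/2 := by
  have key : ∀ y : ℝ, y ≤ 0 → 0 ≤ 1 + y + y^2/2 - Real.exp y := by
    apply aux_nonneg_Iic (f' := fun y => 1 + y - Real.exp y)
    · intro y
      have h1 : HasDerivAt (fun y : ℝ => 1 + y + y^2/2 - Real.exp y)
          (0 + 1 + (2*y^1)/2 - Real.exp y) y := by
        exact (((hasDerivAt_const y (1:ℝ)).add (hasDerivAt_id y)).add
          ((hasDerivAt_pow 2 y).div_const 2)).sub (Real.hasDerivAt_exp y)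
      convert h1 using 1; ring
    · simp
    · intro y _; have := Real.add_one_le_exp y; linarith
  linarith [key x hx]

lemma cubic_le_exp (x : ℝ) : 1 + x + x^2/2 + x^3/6 ≤ Real.exp x := by
  rcases le_or_gt 0 x with hx | hx
  · have h := Real.sum_le_exp_of_nonneg hx 4
    simp [Finset.sum_range_succ, Nat.factorial] at h
    norm_num at h
    nlinarith
  · have key : ∀ y : ℝ, y ≤ 0 → 0 ≤ Real.exp y - (1 + y + y^2/2 + y^3/6) := by
      apply aux_nonneg_Iic (f' := fun y => Real.exp y - (1 + y + y^2/2))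
      · intro y
        have h1 : HasDerivAt (fun y : ℝ => Real.exp y - (1 + y + y^2/2 + y^3/6))
            (Real.exp y - (0 + 1 + (2*y^1)/2 + (3*y^2)/6)) y := by
          exact (Real.hasDerivAt_exp y).sub
            ((((hasDerivAt_const y (1:ℝ)).add (hasDerivAt_id y)).add
              ((hasDerivAt_pow 2 y).div_const 2)).add ((hasDerivAt_pow 3 y).div_const 6))
        convert h1 using 1; ring
      · simp
      · intro y hy; have := exp_le_quad y hy; linarith
    linarith [key x hx.le]

/-- n=3 Taylor bound with exp factor, for x ≥ 0 -/
lemma taylor3 (x : ℝ) (hx : 0 ≤ x) :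
    Real.exp x - (1 + x + x^2/2) ≤ x^3/6 * Real.exp x := by
  have key : ∀ y : ℝ, 0 ≤ y → 0 ≤ y^3/6 - 1 + (1 + y + y^2/2) * Real.exp (-y) := by
    apply aux_nonneg_Ici (f' := fun y => y^2/2 - y^2/2 * Real.exp (-y))
    · intro y
      have he : HasDerivAt (fun y : ℝ => Real.exp (-y)) (-Real.exp (-y)) y := by
        simpa [Function.comp_def] using (Real.hasDerivAt_exp (-y)).comp y ((hasDerivAt_id y).neg)
      have hp : HasDerivAt (fun y : ℝ => 1 + y + y^2/2) (1 + y) y := by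
        have := ((hasDerivAt_const y (1:ℝ)).add (hasDerivAt_id y)).add
          ((hasDerivAt_pow 2 y).div_const 2)
        exact this.congr_deriv (by norm_num)
      have h1 : HasDerivAt (fun y : ℝ => y^3/6 - 1 + (1 + y + y^2/2) * Real.exp (-y))
          ((3*y^2)/6 - 0 + ((1 + y) * Real.exp (-y) + (1 + y + y^2/2) * (-Real.exp (-y)))) y := by
        exact (((hasDerivAt_pow 3 y).div_const 6).sub (hasDerivAt_const y 1)).add (hp.mul he)
      convert h1 using 1; ring
    · simp
    · intro y hy
      have h1 : Real.exp (-y) ≤ 1 := Real.exp_le_one_iff.mpr (by linarith)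
      nlinarith [sq_nonneg y]
  have h := key x hx
  have hmul := mul_le_mul_of_nonneg_right (by linarith : (1:ℝ) - x^3/6 ≤ (1 + x + x^2/2) * Real.exp (-x)) (Real.exp_pos x).le
  rw [mul_assoc, ← Real.exp_add] at hmul
  simp at hmul
  nlinarith [Real.exp_pos x]

/-- n=4 Taylor bound with exp factor, for x ≥ 0 -/
lemma taylor4 (x : ℝ) (hx : 0 ≤ x) :
    Real.exp x - (1 + x + x^2/2 + x^3/6) ≤ x^4/24 * Real.exp x := by
  have key : ∀ y : ℝ, 0 ≤ y → 0 ≤ y^4/24 - 1 + (1 + y + y^2/2 + y^3/6) * Real.exp (-y) := by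
    apply aux_nonneg_Ici (f' := fun y => y^3/6 - y^3/6 * Real.exp (-y))
    · intro y
      have he : HasDerivAt (fun y : ℝ => Real.exp (-y)) (-Real.exp (-y)) y := by
        simpa [Function.comp_def] using (Real.hasDerivAt_exp (-y)).comp y ((hasDerivAt_id y).neg)
      have hp : HasDerivAt (fun y : ℝ => 1 + y + y^2/2 + y^3/6) (1 + y + y^2/2) y := by
        have := (((hasDerivAt_const y (1:ℝ)).add (hasDerivAt_id y)).add
          ((hasDerivAt_pow 2 y).div_const 2)).add ((hasDerivAt_pow 3 y).div_const 6)
        exact this.congr_deriv (by norm_num; ring)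
      have h1 : HasDerivAt (fun y : ℝ => y^4/24 - 1 + (1 + y + y^2/2 + y^3/6) * Real.exp (-y))
          ((4*y^3)/24 - 0 + ((1 + y + y^2/2) * Real.exp (-y)
            + (1 + y + y^2/2 + y^3/6) * (-Real.exp (-y)))) y := by
        exact (((hasDerivAt_pow 4 y).div_const 24).sub (hasDerivAt_const y 1)).add (hp.mul he)
      convert h1 using 1; ring
    · simp
    · intro y hy
      have h1 : Real.exp (-y) ≤ 1 := Real.exp_le_one_iff.mpr (by linarith)
      nlinarith [pow_nonneg hy 3]
  have h := key x hx
  have hmul := mul_le_mul_of_nonneg_right (by linarith : (1:ℝ) - x^4/24 ≤ (1 + x + x^2/2 + x^3/6) * Real.exp (-x)) (Real.exp_pos x).le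
  rw [mul_assoc, ← Real.exp_add] at hmul
  simp at hmul
  nlinarith [Real.exp_pos x]

/-- |e^x - 1 - x - x²/2| ≤ |x| (e^x - 1 - x) -/
lemma psi_bound (x : ℝ) :
    |Real.exp x - 1 - x - x^2/2| ≤ |x| * (Real.exp x - 1 - x) := by
  have hmono : Monotone (fun x : ℝ => x * (Real.exp x - 1 - x) - (Real.exp x - 1 - x - x^2/2)) := by
    apply monotone_of_deriv_nonneg
    · intro y
      apply HasDerivAt.differentiableAt (f' := (Real.exp y - 1 - y) + y * (Real.exp y - 1)
        - (Real.exp y - 1 - y))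
      have h1 : HasDerivAt (fun x : ℝ => x * (Real.exp x - 1 - x))
          ((Real.exp y - 1 - y) + y * (Real.exp y - 1)) y := by
        have := (hasDerivAt_id y).mul ((Real.hasDerivAt_exp y).sub
          ((hasDerivAt_const y 1).add (hasDerivAt_id y)))
        have h2 := ((hasDerivAt_id y).mul (((Real.hasDerivAt_exp y).sub
          (hasDerivAt_const y 1)).sub (hasDerivAt_id y)))
        exact h2.congr_deriv (by simp)
      have h3 : HasDerivAt (fun x : ℝ => Real.exp x - 1 - x - x^2/2)
          (Real.exp y - 0 - 1 - (2*y^1)/2) y := by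
        exact (((Real.hasDerivAt_exp y).sub (hasDerivAt_const y 1)).sub
          (hasDerivAt_id y)).sub ((hasDerivAt_pow 2 y).div_const 2)
      have := h1.sub h3
      exact this.congr_deriv (by ring)
    · intro y
      have h1 : HasDerivAt (fun x : ℝ => x * (Real.exp x - 1 - x) - (Real.exp x - 1 - x - x^2/2))
          (y * (Real.exp y - 1)) y := by
        have h2 := ((hasDerivAt_id y).mul (((Real.hasDerivAt_exp y).sub
          (hasDerivAt_const y 1)).sub (hasDerivAt_id y)))
        have h3 : HasDerivAt (fun x : ℝ => Real.exp x - 1 - x - x^2/2)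
            (Real.exp y - 0 - 1 - (2*y^1)/2) y := by
          exact (((Real.hasDerivAt_exp y).sub (hasDerivAt_const y 1)).sub
            (hasDerivAt_id y)).sub ((hasDerivAt_pow 2 y).div_const 2)
        have := h2.sub h3
        exact this.congr_deriv (by simp)
      rw [h1.deriv]
      rcases le_or_gt 0 y with hy | hy
      · have := Real.add_one_le_exp y; nlinarith
      · have := Real.exp_le_one_iff.mpr hy.le; nlinarith
  have h0 : (fun x : ℝ => x * (Real.exp x - 1 - x) - (Real.exp x - 1 - x - x^2/2)) 0 = 0 := by simp
  rcases le_or_gt 0 x with hx | hx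
  · have := hmono (show (0:ℝ) ≤ x from hx)
    rw [h0] at this
    have hg : 0 ≤ Real.exp x - 1 - x - x^2/2 := by have := quad_le_exp x hx; linarith
    rw [abs_of_nonneg hg, abs_of_nonneg hx]
    simp at this; linarith
  · have := hmono (show x ≤ (0:ℝ) from hx.le)
    rw [h0] at this
    have hg : Real.exp x - 1 - x - x^2/2 ≤ 0 := by have := exp_le_quad x hx.le; linarith
    rw [abs_of_nonpos hg, abs_of_neg hx]
    simp at this; nlinarith

lemma sq_le_cosh (u : ℝ) : u^2 ≤ Real.exp u + Real.exp (-u) - 2 := by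
  have key : ∀ v : ℝ, 0 ≤ v → v^2 ≤ Real.exp v + Real.exp (-v) - 2 := by
    intro v hv
    have hs : v/2 ≤ Real.sinh (v/2) := Real.self_le_sinh_iff.mpr (by linarith)
    rw [Real.sinh_eq] at hs
    have hab : Real.exp (v/2) * Real.exp (-(v/2)) = 1 := by
      rw [← Real.exp_add]; simp
    have ha2 : Real.exp (v/2) * Real.exp (v/2) = Real.exp v := by
      rw [← Real.exp_add]; ring_nf
    have hb2 : Real.exp (-(v/2)) * Real.exp (-(v/2)) = Real.exp (-v) := by
      rw [← Real.exp_add]; ring_nf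
    nlinarith [Real.exp_pos (v/2), Real.exp_pos (-(v/2))]
  rcases le_or_gt 0 u with hu | hu
  · exact key u hu
  · have := key (-u) (by linarith)
    simp only [neg_neg] at this
    nlinarith
lemma pow4_le_cosh (u : ℝ) : u^4 ≤ 24 * (Real.exp u + Real.exp (-u) - 2) := by
  have key : ∀ v : ℝ, 0 ≤ v → v^4 ≤ 24 * (Real.exp v + Real.exp (-v) - 2) := by
    intro v hv
    have h := Real.sum_le_exp_of_nonneg hv 5
    simp [Finset.sum_range_succ, Nat.factorial] at h
    have h2 := Real.add_one_le_exp (-v)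
    nlinarith [pow_nonneg hv 2, pow_nonneg hv 3]
  rcases le_or_gt 0 u with hu | hu
  · exact key u hu
  · have := key (-u) (by linarith)
    simp only [neg_neg] at this
    nlinarith
lemma pow8_le_cosh (u : ℝ) : u^8 ≤ 40320 * (Real.exp u + Real.exp (-u) - 2) := by
  have key : ∀ v : ℝ, 0 ≤ v → v^8 ≤ 40320 * (Real.exp v + Real.exp (-v) - 2) := by
    intro v hv
    have h := Real.sum_le_exp_of_nonneg hv 9
    simp [Finset.sum_range_succ, Nat.factorial] at h
    have h2 := Real.add_one_le_exp (-v)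
    nlinarith [pow_nonneg hv 2, pow_nonneg hv 3, pow_nonneg hv 4, pow_nonneg hv 5,
      pow_nonneg hv 6, pow_nonneg hv 7]
  rcases le_or_gt 0 u with hu | hu
  · exact key u hu
  · have := key (-u) (by linarith)
    simp only [neg_neg] at this
    nlinarith

lemma abs_pow_le_exp (k : ℕ) (x : ℝ) :
    |x|^k ≤ (k.factorial : ℝ) * (Real.exp x + Real.exp (-x)) := by
  have h1 : |x|^k / (k.factorial : ℝ) ≤ Real.exp |x| := by
    calc |x|^k / (k.factorial : ℝ)
        ≤ ∑ i ∈ Finset.range (k+1), |x|^i / (i.factorial : ℝ) := by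
          exact Finset.single_le_sum (f := fun i => |x|^i / (i.factorial : ℝ))
            (fun i _ => by positivity) (Finset.self_mem_range_succ k)
      _ ≤ Real.exp |x| := Real.sum_le_exp_of_nonneg (abs_nonneg x) (k+1)
  have h2 : Real.exp |x| ≤ Real.exp x + Real.exp (-x) := by
    rcases abs_cases x with ⟨h, _⟩ | ⟨h, _⟩ <;> rw [h] <;>
      [linarith [Real.exp_pos (-x)]; linarith [Real.exp_pos x]]
  have hk : (0:ℝ) < (k.factorial : ℝ) := by positivity
  calc |x|^k = |x|^k / (k.factorial : ℝ) * (k.factorial : ℝ) := by field_simp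
    _ ≤ Real.exp |x| * (k.factorial : ℝ) := by
        apply mul_le_mul_of_nonneg_right h1 hk.le
    _ ≤ (Real.exp x + Real.exp (-x)) * (k.factorial : ℝ) := by
        apply mul_le_mul_of_nonneg_right h2 hk.le
    _ = _ := by ring

lemma abs_pow_mul_exp_le (k : ℕ) (c x : ℝ) :
    |x|^k * Real.exp (c*x) ≤
      (k.factorial : ℝ) * (Real.exp ((c+1)*x) + Real.exp ((c-1)*x)) := by
  have h := abs_pow_le_exp k x
  have := mul_le_mul_of_nonneg_right h (Real.exp_pos (c*x)).le
  calc |x|^k * Real.exp (c*x)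
      ≤ (k.factorial : ℝ) * (Real.exp x + Real.exp (-x)) * Real.exp (c*x) := this
    _ = (k.factorial : ℝ) * (Real.exp x * Real.exp (c*x) + Real.exp (-x) * Real.exp (c*x)) := by
        ring
    _ = (k.factorial : ℝ) * (Real.exp ((c+1)*x) + Real.exp ((c-1)*x)) := by
        rw [← Real.exp_add, ← Real.exp_add]; ring_nf

lemma exp_le_inv_one_sub {t : ℝ} (h0 : 0 ≤ t) (h1 : t < 1) : Real.exp t ≤ 1/(1-t) := by
  have h := Real.add_one_le_exp (-t)
  have hinv : Real.exp (-t) * Real.exp t = 1 := by rw [← Real.exp_add]; simp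
  rw [le_div_iff₀ (by linarith)]
  nlinarith [Real.exp_pos t]

lemma exp_sub_one_le_mul {t : ℝ} (h0 : 0 ≤ t) : Real.exp t - 1 ≤ t * Real.exp t := by
  have h := Real.add_one_le_exp (-t)
  have hinv : Real.exp (-t) * Real.exp t = 1 := by rw [← Real.exp_add]; simp
  nlinarith [Real.exp_pos t]

lemma pb1 (x : ℝ) : |Real.exp x - 1 - x - x^2/2| ≤ |x|^3/6 + x^4 * Real.exp x/24 := by
  rcases le_or_gt 0 x with hx | hx
  · have h4 := taylor4 x hx
    have hq := quad_le_exp x hx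
    rw [abs_of_nonneg (by linarith), abs_of_nonneg hx]
    linarith
  · have hq := exp_le_quad x hx.le
    have hc := cubic_le_exp x
    rw [abs_of_nonpos (by linarith), abs_of_neg hx]
    nlinarith [mul_nonneg (pow_nonneg (sq_nonneg x) 2) (Real.exp_pos x).le,
      pow_nonneg (sq_nonneg x) 2, Real.exp_pos x]

lemma pb2 (x : ℝ) : |x * Real.exp x - x - x^2| ≤ |x|^3/2 + x^4 * Real.exp x/6 := by
  have hid : x * Real.exp x - x - x^2 = x * (Real.exp x - 1 - x) := by ring
  have hnn : 0 ≤ Real.exp x - 1 - x := by have := Real.add_one_le_exp x; linarith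
  rw [hid, abs_mul, abs_of_nonneg hnn]
  rcases le_or_gt 0 x with hx | hx
  · have h3 := taylor3 x hx
    rw [abs_of_nonneg hx]
    nlinarith [Real.exp_pos x]
  · have hq := exp_le_quad x hx.le
    rw [abs_of_neg hx]
    nlinarith [mul_nonneg (mul_nonneg (pow_nonneg (sq_nonneg x) 1) (neg_nonneg.mpr hx.le)) (Real.exp_pos x).le,
      mul_nonneg (pow_nonneg (sq_nonneg x) 2) (Real.exp_pos x).le]

lemma pb3 (x : ℝ) : |x * Real.exp x - x - x^2| = |x| * (Real.exp x - 1 - x) := by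
  have hnn : 0 ≤ Real.exp x - 1 - x := by have := Real.add_one_le_exp x; linarith
  rw [show x * Real.exp x - x - x^2 = x * (Real.exp x - 1 - x) by ring, abs_mul,
    abs_of_nonneg hnn]

open MeasureTheory Finset

set_option maxHeartbeats 4000000 in
/-- If `X` satisfies `E[exp(μX)] ≤ exp(μ²ε²/2)` for all real `μ`
(`ε > 0`), then `|E[e^X] − 1 − E[X] − E[X²]/2| ≤ 2ε³e^{ε²}` and
`|E[X e^X] − E[X] − E[X²]| ≤ 5ε³e^{ε²}`. -/
theorem exp_moment_expansion
    {Ω : Type*} [MeasurableSpace Ω] (P : Measure Ω) [IsProbabilityMeasure P]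
    (X : Ω → ℝ) (ε : ℝ) (hε : 0 < ε)
    (hint : ∀ μ : ℝ, Integrable (fun ω => Real.exp (μ * X ω)) P)
    (hmgf : ∀ μ : ℝ, ∫ ω, Real.exp (μ * X ω) ∂P ≤ Real.exp (μ ^ 2 * ε ^ 2 / 2)) :
    |(∫ ω, Real.exp (X ω) ∂P) - 1 - (∫ ω, X ω ∂P) - (∫ ω, X ω ^ 2 ∂P) / 2|
        ≤ 2 * ε ^ 3 * Real.exp (ε ^ 2) ∧
    |(∫ ω, X ω * Real.exp (X ω) ∂P) - (∫ ω, X ω ∂P) - ∫ ω, X ω ^ 2 ∂P|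
        ≤ 5 * ε ^ 3 * Real.exp (ε ^ 2) := by
  have hε2 : (0:ℝ) < ε^2 := by positivity
  -- measurability of X
  have hXm : AEMeasurable X P := by
    have h := (hint 1).aestronglyMeasurable.aemeasurable
    have heq : (fun ω => Real.log (Real.exp (1 * X ω))) = X := by
      funext ω; rw [Real.log_exp]; ring
    rw [← heq]
    exact Real.measurable_log.comp_aemeasurable h
  -- master integrability
  have hmaster : ∀ (k : ℕ) (c : ℝ), Integrable (fun ω => |X ω|^k * Real.exp (c * X ω)) P := by
    intro k c
    have hsm : AEStronglyMeasurable (fun ω => |X ω|^k * Real.exp (c * X ω)) P :=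
      (((measurable_abs.comp_aemeasurable hXm).pow_const k).mul
        (Real.measurable_exp.comp_aemeasurable (hXm.const_mul c))).aestronglyMeasurable
    apply Integrable.mono' (((hint (c+1)).add (hint (c-1))).const_mul (k.factorial : ℝ)) hsm
    filter_upwards with ω
    rw [Real.norm_eq_abs, abs_of_nonneg (by positivity)]
    exact abs_pow_mul_exp_le k c (X ω)
  have hIpow : ∀ (k : ℕ) (c : ℝ), Integrable (fun ω => X ω^k * Real.exp (c * X ω)) P := by
    intro k c
    apply Integrable.mono' (hmaster k c)
    · exact ((hXm.pow_const k).mul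
        (Real.measurable_exp.comp_aemeasurable (hXm.const_mul c))).aestronglyMeasurable
    · filter_upwards with ω
      rw [Real.norm_eq_abs, abs_mul, abs_pow, abs_of_nonneg (Real.exp_pos _).le]
  have hIXk : ∀ k : ℕ, Integrable (fun ω => X ω^k) P := by
    intro k; have := hIpow k 0; simpa using this
  have hIabsk : ∀ k : ℕ, Integrable (fun ω => |X ω|^k) P := by
    intro k; have := hmaster k 0; simpa using this
  have hIX : Integrable X P := by have := hIXk 1; simpa using this
  have hIX2 := hIXk 2
  have hIeX : Integrable (fun ω => Real.exp (X ω)) P := by have := hint 1; simpa using this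
  have hIXeX : Integrable (fun ω => X ω * Real.exp (X ω)) P := by
    have := hIpow 1 1; simpa using this
  have hIX4eX : Integrable (fun ω => X ω^4 * Real.exp (X ω)) P := by
    have := hIpow 4 1; simpa using this
  -- moment helper
  have hmom : ∀ (k : ℕ) (C μ : ℝ), 0 < μ → 0 ≤ C →
      (∀ u : ℝ, u^k ≤ C * (Real.exp u + Real.exp (-u) - 2)) →
      ∫ ω, X ω^k ∂P ≤ C * (2 * Real.exp (μ^2 * ε^2/2) - 2) / μ^k := by
    intro k C μ hμ hC hpt
    have hμk : (0:ℝ) < μ^k := pow_pos hμ k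
    have hpt2 : ∀ ω, X ω^k ≤ (C/μ^k) * (Real.exp (μ * X ω) + Real.exp (-μ * X ω) - 2) := by
      intro ω
      have h := hpt (μ * X ω)
      rw [mul_pow] at h
      rw [neg_mul] at *
      rw [div_mul_eq_mul_div, le_div_iff₀ hμk]
      nlinarith [h]
    have hIrhs : Integrable
        (fun ω => (C/μ^k) * (Real.exp (μ * X ω) + Real.exp (-μ * X ω) - 2)) P :=
      ((((hint μ).add (hint (-μ))).sub (integrable_const 2)).const_mul _)
    have hmono := integral_mono (hIXk k) hIrhs hpt2
    rw [integral_const_mul] at hmono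
    have hsplit : ∫ ω, (Real.exp (μ * X ω) + Real.exp (-μ * X ω) - 2) ∂P
        = (∫ ω, Real.exp (μ * X ω) ∂P) + (∫ ω, Real.exp (-μ * X ω) ∂P) - 2 := by
      have hadd : Integrable (fun ω => Real.exp (μ * X ω) + Real.exp (-μ * X ω)) P :=
        (hint μ).add (hint (-μ))
      rw [integral_sub hadd (integrable_const 2), integral_add (hint μ) (hint (-μ))]
      simp
    rw [hsplit] at hmono
    have h1 := hmgf μ
    have h2 := hmgf (-μ)
    rw [show ((-μ)^2 : ℝ) = μ^2 by ring] at h2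
    calc ∫ ω, X ω^k ∂P
        ≤ (C/μ^k) * ((∫ ω, Real.exp (μ * X ω) ∂P) + (∫ ω, Real.exp (-μ * X ω) ∂P) - 2) := hmono
      _ ≤ (C/μ^k) * (2 * Real.exp (μ^2 * ε^2/2) - 2) := by
          apply mul_le_mul_of_nonneg_left _ (by positivity)
          linarith
      _ = C * (2 * Real.exp (μ^2 * ε^2/2) - 2) / μ^k := by ring
  -- numeric exp facts
  have hexp1 : Real.exp 1 ≤ 2.7182818286 := Real.exp_one_lt_d9.le
  have hexp2 : Real.exp 2 ≤ 7.3890561 := by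
    rw [show (2:ℝ) = 1 + 1 by norm_num, Real.exp_add]
    nlinarith [Real.exp_pos 1]
  have hexp4 : Real.exp 4 ≤ 54.5981501 := by
    rw [show (4:ℝ) = 2 + 2 by norm_num, Real.exp_add]
    nlinarith [Real.exp_pos 2]
  -- second moment
  have hEX2 : ∫ ω, X ω^2 ∂P ≤ 1.01 * ε^2 := by
    have h := hmom 2 1 (1/(10*ε)) (by positivity) zero_le_one
      (fun u => by linarith [sq_le_cosh u])
    rw [show ((1/(10*ε))^2 * ε^2/2 : ℝ) = 1/200 by field_simp <;> ring] at h
    have hexp : Real.exp (1/200 : ℝ) ≤ 200/199 := by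
      have := exp_le_inv_one_sub (t := (1/200 : ℝ)) (by norm_num) (by norm_num)
      norm_num at this ⊢
      linarith
    have hpow : ((1/(10*ε)) : ℝ)^2 = 1/(100*ε^2) := by field_simp <;> ring
    calc ∫ ω, X ω^2 ∂P ≤ 1 * (2 * Real.exp (1/200 : ℝ) - 2) / (1/(10*ε))^2 := h
      _ = (2 * Real.exp (1/200 : ℝ) - 2) * (100 * ε^2) := by
          rw [hpow]; field_simp
      _ ≤ 1.01 * ε^2 := by nlinarith [hε2]
  -- fourth moment
  have hEX4 : ∫ ω, X ω^4 ∂P ≤ 19.17 * ε^4 := by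
    have h := hmom 4 24 (2/ε) (by positivity) (by norm_num)
      (fun u => pow4_le_cosh u)
    rw [show ((2/ε)^2 * ε^2/2 : ℝ) = 2 by field_simp <;> ring] at h
    have hpow : ((2/ε) : ℝ)^4 = 16/ε^4 := by field_simp <;> ring
    calc ∫ ω, X ω^4 ∂P ≤ 24 * (2 * Real.exp 2 - 2) / (2/ε)^4 := h
      _ = 24 * (2 * Real.exp 2 - 2) * ε^4 / 16 := by rw [hpow]; field_simp <;> ring
      _ ≤ 19.17 * ε^4 := by nlinarith [pow_pos hε 4]
  -- eighth moment
  have hEX8 : ∫ ω, X ω^8 ∂P ≤ 1055.3 * ε^8 := by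
    have hsq : (Real.sqrt 8)^2 = 8 := Real.sq_sqrt (by norm_num)
    have hspos : 0 < Real.sqrt 8 := Real.sqrt_pos.mpr (by norm_num)
    have h := hmom 8 40320 (Real.sqrt 8/ε) (by positivity) (by norm_num)
      (fun u => pow8_le_cosh u)
    have he1 : ((Real.sqrt 8/ε)^2 * ε^2/2 : ℝ) = 4 := by
      rw [div_pow, hsq, div_mul_cancel₀ _ hε2.ne']
      norm_num
    have he2 : ((Real.sqrt 8/ε) : ℝ)^8 = 4096/ε^8 := by
      rw [div_pow, show (8:ℕ) = 2*4 by norm_num, pow_mul, hsq]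
      norm_num
    rw [he1, he2] at h
    calc ∫ ω, X ω^8 ∂P ≤ 40320 * (2 * Real.exp 4 - 2) / (4096/ε^8) := h
      _ = 40320 * (2 * Real.exp 4 - 2) * ε^8 / 4096 := by field_simp <;> ring
      _ ≤ 1055.3 * ε^8 := by nlinarith [pow_pos hε 8]
  -- exp(2X)
  have hEe2X : ∫ ω, Real.exp (2 * X ω) ∂P ≤ Real.exp (ε^2)^2 := by
    have h := hmgf 2
    rw [show ((2:ℝ)^2 * ε^2/2) = ε^2 + ε^2 by ring, Real.exp_add] at h
    calc ∫ ω, Real.exp (2 * X ω) ∂P ≤ Real.exp (ε^2) * Real.exp (ε^2) := h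
      _ = Real.exp (ε^2)^2 := by ring
  -- mean is zero
  have hEXle : ∀ ν : ℝ, |ν| ≤ 1/ε → ν * ∫ ω, X ω ∂P ≤ ν^2 * ε^2 := by
    intro ν hνe
    have hpt : ∀ ω, 1 + ν * X ω ≤ Real.exp (ν * X ω) := fun ω => by
      linarith [Real.add_one_le_exp (ν * X ω)]
    have hInt1 : Integrable (fun ω => 1 + ν * X ω) P :=
      (integrable_const 1).add (hIX.const_mul ν)
    have hmono := integral_mono hInt1 (hint ν) hpt
    rw [integral_add (integrable_const 1) (hIX.const_mul ν), integral_const_mul] at hmono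
    simp only [integral_const, measure_univ, probReal_univ, ENNReal.toReal_one, smul_eq_mul, one_mul,
      mul_one] at hmono
    have h2 := hmgf ν
    have hν2 : ν^2 ≤ 1/ε^2 := by
      have h3 : |ν|^2 ≤ (1/ε)^2 := pow_le_pow_left₀ (abs_nonneg ν) hνe 2
      rw [sq_abs] at h3
      calc ν^2 ≤ (1/ε)^2 := h3
        _ = 1/ε^2 := by field_simp
    have ht2 : ν^2 * ε^2/2 ≤ 1/2 := by
      have := mul_le_mul_of_nonneg_right hν2 hε2.le
      rw [div_mul_cancel₀] at this
      · linarith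
      · exact hε2.ne'
    have ht0 : 0 ≤ ν^2 * ε^2/2 := by positivity
    have hexp : Real.exp (ν^2 * ε^2/2) ≤ 1 + ν^2 * ε^2 := by
      have h3 := exp_le_inv_one_sub ht0 (by linarith)
      have h4 : 1/(1 - ν^2 * ε^2/2) ≤ 1 + ν^2 * ε^2 := by
        rw [div_le_iff₀ (by linarith)]
        nlinarith
      linarith
    linarith
  have hEX : ∫ ω, X ω ∂P = 0 := by
    by_contra h
    have hm : 0 < |∫ ω, X ω ∂P| := abs_pos.mpr h
    set I := ∫ ω, X ω ∂P with hI_def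
    set μ₀ := min (1/ε) (|I|/(2*ε^2)) with hμ₀_def
    have hμpos : 0 < μ₀ := lt_min (by positivity) (by positivity)
    have hμle : μ₀ ≤ 1/ε := min_le_left _ _
    have habs : |I| ≤ μ₀ * ε^2 := by
      rcases abs_cases I with ⟨he, _⟩ | ⟨he, _⟩
      · have h1 := hEXle μ₀ (by rwa [abs_of_pos hμpos])
        rw [he]
        nlinarith
      · have h1 := hEXle (-μ₀) (by rwa [abs_neg, abs_of_pos hμpos])
        rw [he]
        nlinarith
    have h2 : μ₀ * ε^2 ≤ |I|/2 := by
      have hr : μ₀ ≤ |I|/(2*ε^2) := min_le_right _ _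
      calc μ₀ * ε^2 ≤ (|I|/(2*ε^2)) * ε^2 := mul_le_mul_of_nonneg_right hr hε2.le
        _ = |I|/2 := by field_simp <;> ring
    linarith
  -- lower bounds
  have hEeX_lb : 1 ≤ ∫ ω, Real.exp (X ω) ∂P := by
    have hpt : ∀ ω, 1 + X ω ≤ Real.exp (X ω) := fun ω => by
      linarith [Real.add_one_le_exp (X ω)]
    have hInt1 : Integrable (fun ω => 1 + X ω) P := (integrable_const 1).add hIX
    have h := integral_mono hInt1 hIeX hpt
    rw [integral_add (integrable_const 1) hIX, hEX] at h
    simpa using h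
  have hEXeX_lb : 0 ≤ ∫ ω, X ω * Real.exp (X ω) ∂P := by
    have hpt : ∀ ω, X ω ≤ X ω * Real.exp (X ω) := by
      intro ω
      rcases le_or_gt 0 (X ω) with hx | hx
      · nlinarith [Real.add_one_le_exp (X ω)]
      · nlinarith [Real.exp_lt_one_iff.mpr hx]
    have h := integral_mono hIX hIXeX hpt
    rwa [hEX] at h
  -- bound on ∫(e^X - 1 - X)²
  have hq : ∫ ω, (Real.exp (X ω) - 1 - X ω)^2 ∂P ≤ Real.exp (ε^2)^2 - 1 + 1.01 * ε^2 := by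
    have hiden : (fun ω => (Real.exp (X ω) - 1 - X ω)^2)
        = fun ω => (Real.exp (2 * X ω) + 1 + X ω^2 + 2 * X ω)
          - (2 * Real.exp (X ω) + 2 * (X ω * Real.exp (X ω))) := by
      funext ω
      rw [two_mul (X ω), Real.exp_add]
      ring
    have hIA : Integrable (fun ω => Real.exp (2 * X ω) + 1 + X ω^2 + 2 * X ω) P :=
      (((hint 2).add (integrable_const 1)).add hIX2).add (hIX.const_mul 2)
    have hIB : Integrable (fun ω => 2 * Real.exp (X ω) + 2 * (X ω * Real.exp (X ω))) P :=
      (hIeX.const_mul 2).add (hIXeX.const_mul 2)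
    rw [hiden, integral_sub hIA hIB]
    have hA : ∫ ω, (Real.exp (2 * X ω) + 1 + X ω^2 + 2 * X ω) ∂P
        = (∫ ω, Real.exp (2 * X ω) ∂P) + 1 + (∫ ω, X ω^2 ∂P) + 2 * ∫ ω, X ω ∂P := by
      have j1 : Integrable (fun ω => Real.exp (2 * X ω) + 1) P :=
        (hint 2).add (integrable_const 1)
      have j2 : Integrable (fun ω => Real.exp (2 * X ω) + 1 + X ω^2) P := j1.add hIX2
      rw [integral_add j2 (hIX.const_mul 2), integral_add j1 hIX2,
        integral_add (hint 2) (integrable_const 1), integral_const_mul]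
      simp [measure_univ]
    have hB : ∫ ω, (2 * Real.exp (X ω) + 2 * (X ω * Real.exp (X ω))) ∂P
        = 2 * (∫ ω, Real.exp (X ω) ∂P) + 2 * ∫ ω, X ω * Real.exp (X ω) ∂P := by
      rw [integral_add (hIeX.const_mul 2) (hIXeX.const_mul 2), integral_const_mul,
        integral_const_mul]
    rw [hA, hB, hEX]
    linarith
  -- Cauchy–Schwarz via AM-GM
  have cs : ∀ (f g : Ω → ℝ) (a b : ℝ), 0 < a → 0 < b →
      Integrable (fun ω => f ω * g ω) P → Integrable (fun ω => f ω^2) P →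
      Integrable (fun ω => g ω^2) P →
      (∫ ω, f ω^2 ∂P) ≤ a^2 → (∫ ω, g ω^2 ∂P) ≤ b^2 →
      (∫ ω, f ω * g ω ∂P) ≤ a * b := by
    intro f g a b ha hb hfg hf2 hg2 hfa hgb
    have hs : (0:ℝ) < b/a := by positivity
    have hpt : ∀ ω, f ω * g ω ≤ (b/a) * f ω^2/2 + g ω^2/(2*(b/a)) := by
      intro ω
      rw [div_add_div _ _ (by norm_num) (by positivity), le_div_iff₀ (by positivity)]
      nlinarith [sq_nonneg ((b/a) * f ω - g ω)]
    have hIrhs : Integrable (fun ω => (b/a) * f ω^2/2 + g ω^2/(2*(b/a))) P :=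
      ((hf2.const_mul (b/a)).div_const 2).add (hg2.div_const (2*(b/a)))
    have h := integral_mono hfg hIrhs hpt
    rw [integral_add ((hf2.const_mul (b/a)).div_const 2) (hg2.div_const (2*(b/a))),
      integral_div, integral_div, integral_const_mul] at h
    have t1 : (b/a) * (∫ ω, f ω^2 ∂P) ≤ (b/a) * a^2 := mul_le_mul_of_nonneg_left hfa hs.le
    have t2 : (∫ ω, g ω^2 ∂P)/(2*(b/a)) ≤ b^2/(2*(b/a)) := by gcongr
    have heq : (b/a) * a^2/2 + b^2/(2*(b/a)) = a*b := by field_simp <;> ring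
    linarith
  -- specific Cauchy–Schwarz consequences
  have hE1 : (1:ℝ) ≤ Real.exp (ε^2) := by nlinarith [Real.add_one_le_exp (ε^2), hε2]
  have habs3eq : (fun ω => |X ω| * X ω^2) = fun ω => |X ω|^3 := by
    funext ω; rw [← sq_abs]; ring
  have hf2 : Integrable (fun ω => |X ω|^2) P := hIabsk 2
  have hf2b : (∫ ω, |X ω|^2 ∂P) ≤ (1.005*ε)^2 := by
    have he : (fun ω => |X ω|^2) = fun ω => X ω^2 := by funext ω; exact sq_abs _
    rw [he]; nlinarith [hEX2]
  have hI3 : ∫ ω, |X ω|^3 ∂P ≤ 4.41 * ε^3 := by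
    have hfg : Integrable (fun ω => |X ω| * X ω^2) P := by rw [habs3eq]; exact hIabsk 3
    have hsqeq : (fun ω => (X ω^2)^2) = fun ω => X ω^4 := by funext ω; ring
    have hg2 : Integrable (fun ω => (X ω^2)^2) P := by rw [hsqeq]; exact hIXk 4
    have hg2b : (∫ ω, (X ω^2)^2 ∂P) ≤ (4.38*ε^2)^2 := by
      rw [hsqeq]; nlinarith [hEX4, pow_pos hε 4]
    have h := cs (fun ω => |X ω|) (fun ω => X ω^2) (1.005*ε) (4.38*ε^2)
      (by positivity) (by positivity) hfg hf2 hg2 hf2b hg2b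
    rw [habs3eq] at h
    calc ∫ ω, |X ω|^3 ∂P ≤ (1.005*ε) * (4.38*ε^2) := h
      _ ≤ 4.41 * ε^3 := by nlinarith [pow_pos hε 3]
  have hI4e : ∫ ω, X ω^4 * Real.exp (X ω) ∂P ≤ 32.49 * ε^4 * Real.exp (ε^2) := by
    have h8eq : (fun ω => (X ω^4)^2) = fun ω => X ω^8 := by funext ω; ring
    have hf2' : Integrable (fun ω => (X ω^4)^2) P := by rw [h8eq]; exact hIXk 8
    have hf2b' : (∫ ω, (X ω^4)^2 ∂P) ≤ (32.49*ε^4)^2 := by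
      rw [h8eq]; nlinarith [hEX8, pow_pos hε 8]
    have hexpeq : (fun ω => (Real.exp (X ω))^2) = fun ω => Real.exp (2 * X ω) := by
      funext ω; rw [two_mul, Real.exp_add]; ring
    have hg2 : Integrable (fun ω => (Real.exp (X ω))^2) P := by rw [hexpeq]; exact hint 2
    have hg2b : (∫ ω, (Real.exp (X ω))^2 ∂P) ≤ (Real.exp (ε^2))^2 := by
      rw [hexpeq]; exact hEe2X
    exact cs (fun ω => X ω^4) (fun ω => Real.exp (X ω)) (32.49*ε^4) (Real.exp (ε^2))
      (by positivity) (Real.exp_pos _) hIX4eX hf2' hg2 hf2b' hg2b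
  -- integrability of |X|·(e^X−1−X) and (e^X−1−X)²
  have hIabsX : Integrable (fun ω => |X ω|) P := by have := hIabsk 1; simpa using this
  have habsXe : Integrable (fun ω => |X ω| * Real.exp (X ω)) P := by
    have := hmaster 1 1; simpa using this
  have hIB2 : Integrable (fun ω => |X ω| * (Real.exp (X ω) - 1 - X ω)) P := by
    have hexpm : AEMeasurable (fun ω => Real.exp (X ω)) P :=
      Real.measurable_exp.comp_aemeasurable hXm
    have hsm : AEStronglyMeasurable (fun ω => |X ω| * (Real.exp (X ω) - 1 - X ω)) P :=
      ((measurable_abs.comp_aemeasurable hXm).mul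
        ((hexpm.sub aemeasurable_const).sub hXm)).aestronglyMeasurable
    have hg : Integrable (fun ω => |X ω| * Real.exp (X ω) + (|X ω| + X ω^2)) P :=
      habsXe.add (hIabsX.add hIX2)
    apply Integrable.mono' hg hsm
    filter_upwards with ω
    rw [Real.norm_eq_abs]
    have h1 : 0 ≤ Real.exp (X ω) - 1 - X ω := by linarith [Real.add_one_le_exp (X ω)]
    rw [abs_of_nonneg (mul_nonneg (abs_nonneg _) h1)]
    nlinarith [mul_nonneg (abs_nonneg (X ω))
        (by linarith [neg_abs_le (X ω)] : (0:ℝ) ≤ |X ω| + X ω),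
      sq_abs (X ω), abs_nonneg (X ω), (Real.exp_pos (X ω)).le]
  have hIq : Integrable (fun ω => (Real.exp (X ω) - 1 - X ω)^2) P := by
    have hiden : (fun ω => (Real.exp (X ω) - 1 - X ω)^2)
        = fun ω => (Real.exp (2 * X ω) + 1 + X ω^2 + 2 * X ω)
          - (2 * Real.exp (X ω) + 2 * (X ω * Real.exp (X ω))) := by
      funext ω
      rw [two_mul (X ω), Real.exp_add]
      ring
    rw [hiden]
    exact ((((hint 2).add (integrable_const 1)).add hIX2).add (hIX.const_mul 2)).sub
      ((hIeX.const_mul 2).add (hIXeX.const_mul 2))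
  -- value identities
  have hval1 : ∫ ω, (Real.exp (X ω) - 1 - X ω - X ω^2/2) ∂P
      = (∫ ω, Real.exp (X ω) ∂P) - 1 - (∫ ω, X ω ∂P) - (∫ ω, X ω^2 ∂P)/2 := by
    have k1 : Integrable (fun ω => Real.exp (X ω) - 1) P := hIeX.sub (integrable_const 1)
    have k2 : Integrable (fun ω => Real.exp (X ω) - 1 - X ω) P := k1.sub hIX
    rw [integral_sub k2 (hIX2.div_const 2), integral_sub k1 hIX,
      integral_sub hIeX (integrable_const 1), integral_div]
    simp [measure_univ]
  have hval2 : ∫ ω, (X ω * Real.exp (X ω) - X ω - X ω^2) ∂P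
      = (∫ ω, X ω * Real.exp (X ω) ∂P) - (∫ ω, X ω ∂P) - ∫ ω, X ω^2 ∂P := by
    have k1 : Integrable (fun ω => X ω * Real.exp (X ω) - X ω) P := hIXeX.sub hIX
    rw [integral_sub k1 hIX2, integral_sub hIXeX hIX]
  have hE2eq : ((199:ℝ)/100*ε^2*Real.exp (ε^2))^2 = (199/100)^2*ε^4*Real.exp (2*ε^2) := by
    rw [mul_pow, mul_pow, sq (Real.exp (ε^2)), ← Real.exp_add, ← two_mul]
    ring
  have hE2eq' : ((497:ℝ)/100*ε^2*Real.exp (ε^2))^2 = (497/100)^2*ε^4*Real.exp (2*ε^2) := by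
    rw [mul_pow, mul_pow, sq (Real.exp (ε^2)), ← Real.exp_add, ← two_mul]
    ring
  have hqE2 : ∫ ω, (Real.exp (X ω) - 1 - X ω)^2 ∂P
      ≤ Real.exp (2*ε^2) - 1 + 1.01 * ε^2 := by
    have : Real.exp (ε^2)^2 = Real.exp (2*ε^2) := by
      rw [sq, ← Real.exp_add, ← two_mul]
    linarith [hq, this.le, this.ge]
  have hsub2 : Real.exp (2*ε^2) - 1 ≤ 2*ε^2*Real.exp (2*ε^2) :=
    exp_sub_one_le_mul (by positivity)
  have hE2ge : (1:ℝ) ≤ Real.exp (2*ε^2) := by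
    nlinarith [Real.add_one_le_exp (2*ε^2), hε2]
  constructor
  · -- statement 1
    rw [← hval1]
    rcases le_or_gt ε 0.9 with hsm | hlg
    · -- small ε: Taylor bound
      have hIBd : Integrable (fun ω => |X ω|^3/6 + X ω^4 * Real.exp (X ω)/24) P :=
        ((hIabsk 3).div_const 6).add (hIX4eX.div_const 24)
      have hbnd := norm_integral_le_of_norm_le hIBd (Filter.Eventually.of_forall (fun ω => by
        rw [Real.norm_eq_abs]; exact pb1 (X ω)))
      rw [Real.norm_eq_abs] at hbnd
      have hsplit : ∫ ω, (|X ω|^3/6 + X ω^4 * Real.exp (X ω)/24) ∂P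
          = (∫ ω, |X ω|^3 ∂P)/6 + (∫ ω, X ω^4 * Real.exp (X ω) ∂P)/24 := by
        rw [integral_add ((hIabsk 3).div_const 6) (hIX4eX.div_const 24),
          integral_div, integral_div]
      rw [hsplit] at hbnd
      have hmul : (0:ℝ) < ε^3 * Real.exp (ε^2) :=
        mul_pos (pow_pos hε 3) (Real.exp_pos _)
      calc |∫ ω, (Real.exp (X ω) - 1 - X ω - X ω^2/2) ∂P|
          ≤ (∫ ω, |X ω|^3 ∂P)/6 + (∫ ω, X ω^4 * Real.exp (X ω) ∂P)/24 := hbnd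
        _ ≤ 2 * ε^3 * Real.exp (ε^2) := by
            have p1 : (∫ ω, |X ω|^3 ∂P) ≤ 4.41*(ε^3*Real.exp (ε^2)) := by
              nlinarith [hI3, hE1, pow_pos hε 3]
            have p2 : (∫ ω, X ω^4 * Real.exp (X ω) ∂P) ≤ 32.49*(0.9*(ε^3*Real.exp (ε^2))) := by
              nlinarith [hI4e, mul_nonneg (sub_nonneg.mpr hsm) hmul.le]
            nlinarith [hmul]
    · -- large ε: Cauchy–Schwarz bound
      have hb : ∫ ω, (Real.exp (X ω) - 1 - X ω)^2 ∂P ≤ ((199:ℝ)/100*ε^2*Real.exp (ε^2))^2 := by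
        rw [hE2eq]
        have hsq1 : (0.81:ℝ) ≤ ε^2 := by nlinarith [hlg, hε]
        have key : (3.01:ℝ)*ε^2 ≤ (199/100)^2*ε^4 := by
          nlinarith [mul_le_mul_of_nonneg_right hsq1 hε2.le, hε2]
        nlinarith [hqE2, hsub2, hE2ge, Real.exp_pos (2*ε^2), hε2,
          mul_le_mul_of_nonneg_right key (Real.exp_pos (2*ε^2)).le,
          mul_nonneg hε2.le (by linarith : (0:ℝ) ≤ Real.exp (2*ε^2) - 1)]
      have hcs := cs (fun ω => |X ω|) (fun ω => Real.exp (X ω) - 1 - X ω)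
        (1.005*ε) ((199:ℝ)/100*ε^2*Real.exp (ε^2)) (by positivity) (by positivity)
        hIB2 hf2 hIq hf2b hb
      have hbnd := norm_integral_le_of_norm_le hIB2 (Filter.Eventually.of_forall (fun ω => by
        rw [Real.norm_eq_abs]; exact psi_bound (X ω)))
      rw [Real.norm_eq_abs] at hbnd
      calc |∫ ω, (Real.exp (X ω) - 1 - X ω - X ω^2/2) ∂P|
          ≤ ∫ ω, |X ω| * (Real.exp (X ω) - 1 - X ω) ∂P := hbnd
        _ ≤ (1.005*ε) * ((199:ℝ)/100*ε^2*Real.exp (ε^2)) := hcs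
        _ ≤ 2*ε^3*Real.exp (ε^2) := by
            nlinarith [mul_pos (pow_pos hε 3) (Real.exp_pos (ε^2))]
  · -- statement 2
    rw [← hval2]
    rcases le_or_gt ε 0.5 with hsm | hlg
    · -- small ε
      have hIBd : Integrable (fun ω => |X ω|^3/2 + X ω^4 * Real.exp (X ω)/6) P :=
        ((hIabsk 3).div_const 2).add (hIX4eX.div_const 6)
      have hbnd := norm_integral_le_of_norm_le hIBd (Filter.Eventually.of_forall (fun ω => by
        rw [Real.norm_eq_abs]; exact pb2 (X ω)))
      rw [Real.norm_eq_abs] at hbnd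
      have hsplit : ∫ ω, (|X ω|^3/2 + X ω^4 * Real.exp (X ω)/6) ∂P
          = (∫ ω, |X ω|^3 ∂P)/2 + (∫ ω, X ω^4 * Real.exp (X ω) ∂P)/6 := by
        rw [integral_add ((hIabsk 3).div_const 2) (hIX4eX.div_const 6),
          integral_div, integral_div]
      rw [hsplit] at hbnd
      have hmul : (0:ℝ) < ε^3 * Real.exp (ε^2) :=
        mul_pos (pow_pos hε 3) (Real.exp_pos _)
      calc |∫ ω, (X ω * Real.exp (X ω) - X ω - X ω^2) ∂P|
          ≤ (∫ ω, |X ω|^3 ∂P)/2 + (∫ ω, X ω^4 * Real.exp (X ω) ∂P)/6 := hbnd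
        _ ≤ 5 * ε^3 * Real.exp (ε^2) := by
            have p1 : (∫ ω, |X ω|^3 ∂P) ≤ 4.41*(ε^3*Real.exp (ε^2)) := by
              nlinarith [hI3, hE1, pow_pos hε 3]
            have p2 : (∫ ω, X ω^4 * Real.exp (X ω) ∂P) ≤ 32.49*(0.5*(ε^3*Real.exp (ε^2))) := by
              nlinarith [hI4e, mul_nonneg (sub_nonneg.mpr hsm) hmul.le]
            nlinarith [hmul]
    · -- large ε
      have hb : ∫ ω, (Real.exp (X ω) - 1 - X ω)^2 ∂P ≤ ((497:ℝ)/100*ε^2*Real.exp (ε^2))^2 := by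
        rw [hE2eq']
        have hsq1 : (0.25:ℝ) ≤ ε^2 := by nlinarith [hlg, hε]
        have key : (3.01:ℝ)*ε^2 ≤ (497/100)^2*ε^4 := by
          nlinarith [mul_le_mul_of_nonneg_right hsq1 hε2.le, hε2]
        nlinarith [hqE2, hsub2, hE2ge, Real.exp_pos (2*ε^2), hε2,
          mul_le_mul_of_nonneg_right key (Real.exp_pos (2*ε^2)).le,
          mul_nonneg hε2.le (by linarith : (0:ℝ) ≤ Real.exp (2*ε^2) - 1)]
      have hcs := cs (fun ω => |X ω|) (fun ω => Real.exp (X ω) - 1 - X ω)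
        (1.005*ε) ((497:ℝ)/100*ε^2*Real.exp (ε^2)) (by positivity) (by positivity)
        hIB2 hf2 hIq hf2b hb
      have hbnd := norm_integral_le_of_norm_le hIB2 (Filter.Eventually.of_forall (fun ω => by
        rw [Real.norm_eq_abs]; exact (pb3 (X ω)).le))
      rw [Real.norm_eq_abs] at hbnd
      calc |∫ ω, (X ω * Real.exp (X ω) - X ω - X ω^2) ∂P|
          ≤ ∫ ω, |X ω| * (Real.exp (X ω) - 1 - X ω) ∂P := hbnd
        _ ≤ (1.005*ε) * ((497:ℝ)/100*ε^2*Real.exp (ε^2)) := hcs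
        _ ≤ 5*ε^3*Real.exp (ε^2) := by
            nlinarith [mul_pos (pow_pos hε 3) (Real.exp_pos (ε^2))]
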